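/- Let z_1,...,z_r be distinct complex numbers with |z_j| ≤ 1 and pairwise separation Δ := min_{j≠k} |z_j - z_k|. Then every entry W_{jk} of the inverse Vandermonde matrix V^{-1} satisfies |W_{jk}| ≤ C(r-1, r-j) / Δ^{r-1}. -/

import Mathlib

open Matrix Finset

open Polynomial in
theorem vandermonde_inverse_entry_bound (r : ℕ) (z : Fin r → ℂ)
    (hzle : ∀ j, ‖z j‖ ≤ 1)
    (Δ : ℝ) (hΔpos : 0 < Δ)
    (hΔ : ∀ j k, j ≠ k → Δ ≤ ‖z j - z k‖)
    (V : Matrix (Fin r) (Fin r) ℂ)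
    (hV : ∀ j k, V j k = z j ^ (k.1)) :
    ∀ j k : Fin r,
      ‖V⁻¹ j k‖ ≤ ((r - 1).choose (r - 1 - j.1) : ℝ) / Δ ^ (r - 1) := by
  intro j k
  have hr : 0 < r := j.pos
  have hinj : Function.Injective z := by
    intro a b hab
    by_contra h
    have := hΔ a b h
    rw [hab, sub_self] at this
    simp only [norm_zero] at this
    linarith
  -- The inverse is given by Lagrange basis coefficients
  set W : Matrix (Fin r) (Fin r) ℂ :=
    fun a b => (Lagrange.basis Finset.univ z b).coeff a with hWdef
  have hdeg : ∀ b : Fin r, (Lagrange.basis Finset.univ z b).natDegree = r - 1 := fun b =>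
    (Lagrange.natDegree_basis (hinj.injOn) (mem_univ b)).trans (by simp)
  have hinv : V⁻¹ = W := by
    apply Matrix.inv_eq_right_inv
    ext a b
    have hdlt : (Lagrange.basis Finset.univ z b).natDegree < r := by
      rw [hdeg b]; omega
    have heval : (Lagrange.basis Finset.univ z b).eval (z a)
        = ∑ c : Fin r, (Lagrange.basis Finset.univ z b).coeff c * z a ^ (c : ℕ) := by
      rw [Polynomial.eval_eq_sum_range' hdlt, Fin.sum_univ_eq_sum_range
        (fun c => (Lagrange.basis Finset.univ z b).coeff c * z a ^ c)]
    by_cases hab : a = b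
    · subst hab
      have := Lagrange.eval_basis_self (hinj.injOn) (mem_univ a)
      rw [heval] at this
      rw [Matrix.mul_apply]
      simp only [Matrix.mul_apply, hV, hWdef, Matrix.one_apply_eq]
      rw [← this]
      exact Finset.sum_congr rfl fun c _ => by ring
    · have := Lagrange.eval_basis_of_ne (v := z) (Ne.symm hab) (mem_univ a)
      rw [heval] at this
      rw [Matrix.mul_apply]
      simp only [Matrix.mul_apply, hV, hWdef, Matrix.one_apply_ne hab]
      rw [← this]
      exact Finset.sum_congr rfl fun c _ => by ring
  rw [hinv]
  -- Now bound the coefficient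
  set t : Finset (Fin r) := Finset.univ.erase k with htdef
  have hcard : t.card = r - 1 := by simp [htdef]
  have hbasis : Lagrange.basis Finset.univ z k
      = C (∏ l ∈ t, (z k - z l)⁻¹) * ∏ l ∈ t, (X - C (z l)) := by
    rw [Lagrange.basis, map_prod, ← Finset.prod_mul_distrib]
    rfl
  have hcoeff : W j k = (∏ l ∈ t, (z k - z l)⁻¹) *
      (∏ l ∈ t, (X - C (z l))).coeff j := by
    rw [hWdef]
    simp [hbasis, Polynomial.coeff_C_mul]
  -- coefficient of the monic product: Vieta
  have hprodm : (∏ l ∈ t, (X - C (z l))) = ((t.val.map z).map fun x => X - C x).prod := by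
    rw [Multiset.map_map]
    rfl
  have hjle : (j : ℕ) ≤ Multiset.card (t.val.map z) := by
    simp [hcard]; omega
  have hvieta : (∏ l ∈ t, (X - C (z l))).coeff j
      = (-1) ^ (r - 1 - j) * (t.val.map z).esymm (r - 1 - j) := by
    rw [hprodm, Multiset.prod_X_sub_C_coeff _ hjle]
    congr 2 <;> simp [hcard]
  -- bound on esymm
  have hesymm : ‖(t.val.map z).esymm (r - 1 - j)‖
      ≤ ((r - 1).choose (r - 1 - j) : ℝ) := by
    rw [Finset.esymm_map_val]
    calc ‖∑ u ∈ t.powersetCard (r - 1 - j), ∏ l ∈ u, z l‖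
        ≤ ∑ u ∈ t.powersetCard (r - 1 - j), ‖∏ l ∈ u, z l‖ := by
          exact norm_sum_le _ _
      _ ≤ ∑ u ∈ t.powersetCard (r - 1 - j), 1 := by
          refine Finset.sum_le_sum fun u _ => ?_
          rw [norm_prod]
          exact Finset.prod_le_one (fun l _ => norm_nonneg _)
            (fun l _ => hzle l)
      _ = ((r - 1).choose (r - 1 - j) : ℝ) := by
          rw [Finset.sum_const, Finset.card_powersetCard, hcard]
          simp
  -- bound on the denominator product
  have hden : ‖∏ l ∈ t, (z k - z l)⁻¹‖ ≤ (Δ ^ (r - 1))⁻¹ := by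
    rw [norm_prod]
    have h2 : (Δ ^ (r - 1))⁻¹ = ∏ _l ∈ t, Δ⁻¹ := by
      rw [Finset.prod_const, hcard, inv_pow]
    rw [h2]
    refine Finset.prod_le_prod (fun l _ => by positivity) fun l hl => ?_
    rw [norm_inv]
    refine inv_anti₀ hΔpos (hΔ k l ?_)
    exact fun h => (Finset.mem_erase.mp hl).1 h.symm
  calc ‖W j k‖
      = ‖∏ l ∈ t, (z k - z l)⁻¹‖ *
        ‖(∏ l ∈ t, (X - C (z l))).coeff j‖ := by rw [hcoeff, norm_mul]
    _ ≤ (Δ ^ (r - 1))⁻¹ * ((r - 1).choose (r - 1 - j) : ℝ) := by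
        refine mul_le_mul hden ?_ (norm_nonneg _) (by positivity)
        rw [hvieta, norm_mul, norm_pow, norm_neg, norm_one, one_pow, one_mul]
        exact hesymm
    _ = ((r - 1).choose (r - 1 - j.1) : ℝ) / Δ ^ (r - 1) := by ring
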